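/- Let (G,P) be an EDP instance in which every terminal pair has two distinct endpoints, and let {a,b} be an edge of G such that: a and b each have degree at most 2 in G, no terminal pair of P equals {a,b}, and each of a and b occurs in at least one terminal pair of P. Then no solution of (G,P) uses the edge {a,b}; consequently (G,P) is a YES-instance of EDP if and only if (G − e, P) is a YES-instance of EDP, where G − e is obtained from G by deleting the edge {a,b}. -/

import Mathlib

/-- A solution to an instance `(G, P)` of the Edge Disjoint Paths problem:
a family of paths, one per terminal pair, that are pairwise edge-disjoint. -/
def EDPSolution {V ι : Type*} (G : SimpleGraph V) (P : ι → V × V)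
    (W : ∀ i : ι, G.Walk (P i).1 (P i).2) : Prop :=
  (∀ i, (W i).IsPath) ∧
    ∀ i j, i ≠ j → ∀ e ∈ (W i).edges, e ∉ (W j).edges

/-- `(G, P)` is a YES-instance of the Edge Disjoint Paths problem. -/
def EDPYes {V ι : Type*} (G : SimpleGraph V) (P : ι → V × V) : Prop :=
  ∃ W : ∀ i : ι, G.Walk (P i).1 (P i).2, EDPSolution G P W

/-- A nontrivial walk contains an edge through its first vertex. -/
lemma exists_edge_fst {V : Type*} {G : SimpleGraph V} {x v : V} (p : G.Walk x v)
    (hx : x ≠ v) : ∃ e ∈ p.edges, x ∈ e := by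
  cases p with
  | nil => exact absurd rfl hx
  | cons h q => exact ⟨_, List.mem_cons_self, Sym2.mem_mk_left _ _⟩

/-- A nontrivial walk contains an edge through its last vertex. -/
lemma exists_edge_snd {V : Type*} {G : SimpleGraph V} {u x : V} (p : G.Walk u x)
    (hx : u ≠ x) : ∃ e ∈ p.edges, x ∈ e := by
  obtain ⟨e, he, hxe⟩ := exists_edge_fst p.reverse hx.symm
  exact ⟨e, by simpa [SimpleGraph.Walk.edges_reverse] using he, hxe⟩

/-- A path has two distinct edges through any internal vertex. -/
lemma two_edges_of_internal {V : Type*} [DecidableEq V] {G : SimpleGraph V} {u v x : V} (p : G.Walk u v)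
    (hp : p.IsPath) (hs : x ∈ p.support) (hxu : x ≠ u) (hxv : x ≠ v) :
    ∃ e1 e2, e1 ≠ e2 ∧ e1 ∈ p.edges ∧ e2 ∈ p.edges ∧ x ∈ e1 ∧ x ∈ e2 := by
  obtain ⟨e1, he1, hx1⟩ := exists_edge_snd (p.takeUntil x hs) hxu.symm
  obtain ⟨e2, he2, hx2⟩ := exists_edge_fst (p.dropUntil x hs) hxv
  have hspec := p.take_spec hs
  have hnodup : ((p.takeUntil x hs).append (p.dropUntil x hs)).edges.Nodup := by
    rw [hspec]; exact hp.isTrail.edges_nodup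
  rw [SimpleGraph.Walk.edges_append, List.nodup_append] at hnodup
  refine ⟨e1, e2, fun h => hnodup.2.2 _ he1 _ he2 h, ?_, ?_, hx1, hx2⟩
  · rw [← hspec, SimpleGraph.Walk.edges_append]; exact List.mem_append_left _ he1
  · rw [← hspec, SimpleGraph.Walk.edges_append]; exact List.mem_append_right _ he2

/-- A solution cannot route a path through an internal vertex of degree ≤ 2
that is also a terminal of some pair. -/
lemma internal_contra {V : Type*} [Fintype V] [DecidableEq V] (G : SimpleGraph V)
    [DecidableRel G.Adj] {m : ℕ} (P : Fin m → V × V) (hdist : ∀ i, (P i).1 ≠ (P i).2)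
    (W : ∀ i, G.Walk (P i).1 (P i).2) (hsol : EDPSolution G P W)
    (i : Fin m) (x : V) (hx : x ∈ (W i).support) (hx1 : x ≠ (P i).1) (hx2 : x ≠ (P i).2)
    (hdx : G.degree x ≤ 2) (hox : ∃ j, (P j).1 = x ∨ (P j).2 = x) : False := by
  obtain ⟨hpath, hdisj⟩ := hsol
  obtain ⟨e1, e2, hne, he1, he2, hx1e, hx2e⟩ := two_edges_of_internal _ (hpath i) hx hx1 hx2
  obtain ⟨j, hj⟩ := hox
  have hji : j ≠ i := by
    rintro rfl
    rcases hj with h | h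
    · exact hx1 h.symm
    · exact hx2 h.symm
  obtain ⟨e', he', hxe'⟩ : ∃ e ∈ (W j).edges, x ∈ e := by
    rcases hj with h | h
    · obtain ⟨e, he, hm⟩ := exists_edge_fst (W j) (hdist j); exact ⟨e, he, h ▸ hm⟩
    · obtain ⟨e, he, hm⟩ := exists_edge_snd (W j) (hdist j); exact ⟨e, he, h ▸ hm⟩
  have hni : e' ∉ (W i).edges := hdisj j i hji e' he'
  have hne1 : e' ≠ e1 := fun h => hni (h ▸ he1)
  have hne2 : e' ≠ e2 := fun h => hni (h ▸ he2)
  have hsub : ({e1, e2, e'} : Finset (Sym2 V)) ⊆ G.incidenceFinset x := by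
    intro e he
    rw [SimpleGraph.mem_incidenceFinset]
    simp only [Finset.mem_insert, Finset.mem_singleton] at he
    rcases he with rfl | rfl | rfl
    · exact ⟨(W i).edges_subset_edgeSet he1, hx1e⟩
    · exact ⟨(W i).edges_subset_edgeSet he2, hx2e⟩
    · exact ⟨(W j).edges_subset_edgeSet he', hxe'⟩
  have hcard : ({e1, e2, e'} : Finset (Sym2 V)).card = 3 := by
    rw [Finset.card_insert_of_notMem (by simp [hne, hne1.symm]),
      Finset.card_insert_of_notMem (by simp [hne2.symm]),
      Finset.card_singleton]
  have := Finset.card_le_card hsub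
  rw [hcard, SimpleGraph.card_incidenceFinset_eq_degree] at this
  omega

/-- If `{a, b}` is an edge between two vertices of degree at most 2, no
terminal pair equals `{a, b}`, each of `a` and `b` occurs in at least one
terminal pair, and all terminal pairs have distinct endpoints, then no
solution uses the edge `{a, b}`; consequently deleting that edge preserves
the answer to EDP. -/
theorem unused_edge_between_terminals {V : Type*} [Fintype V] [DecidableEq V]
    (G : SimpleGraph V) [DecidableRel G.Adj] {m : ℕ} (P : Fin m → V × V)
    (hdist : ∀ i, (P i).1 ≠ (P i).2) (a b : V) (hab : G.Adj a b)
    (hda : G.degree a ≤ 2) (hdb : G.degree b ≤ 2)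
    (hnotpair : ∀ i, ¬((P i).1 = a ∧ (P i).2 = b) ∧
      ¬((P i).1 = b ∧ (P i).2 = a))
    (hoa : ∃ i, (P i).1 = a ∨ (P i).2 = a)
    (hob : ∃ i, (P i).1 = b ∨ (P i).2 = b) :
    (∀ (W : ∀ i : Fin m, G.Walk (P i).1 (P i).2), EDPSolution G P W →
        ∀ i, s(a, b) ∉ (W i).edges) ∧
      (EDPYes G P ↔ EDPYes (G.deleteEdges {s(a, b)}) P) := by
  have key : ∀ (W : ∀ i : Fin m, G.Walk (P i).1 (P i).2), EDPSolution G P W →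
      ∀ i, s(a, b) ∉ (W i).edges := by
    intro W hsol i he
    by_cases ha : a ≠ (P i).1 ∧ a ≠ (P i).2
    · exact internal_contra G P hdist W hsol i a
        ((W i).fst_mem_support_of_mem_edges he) ha.1 ha.2 hda hoa
    · -- a is an endpoint of `P i`, so `b` is internal
      have haend : a = (P i).1 ∨ a = (P i).2 := by tauto
      have hb1 : b ≠ (P i).1 := by
        rintro rfl
        rcases haend with h | h
        · exact hab.ne h
        · exact (hnotpair i).2 ⟨rfl, h.symm⟩
      have hb2 : b ≠ (P i).2 := by
        rintro rfl
        rcases haend with h | h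
        · exact (hnotpair i).1 ⟨h.symm, rfl⟩
        · exact hab.ne h
      exact internal_contra G P hdist W hsol i b
        ((W i).snd_mem_support_of_mem_edges he) hb1 hb2 hdb hob
  refine ⟨key, ?_, ?_⟩
  · rintro ⟨W, hsol⟩
    have hW : ∀ i, ∀ e ∈ (W i).edges, e ∈ (G.deleteEdges {s(a, b)}).edgeSet := by
      intro i e he
      rw [SimpleGraph.edgeSet_deleteEdges]
      refine ⟨(W i).edges_subset_edgeSet he, ?_⟩
      rintro (rfl : e = s(a, b))
      exact key W hsol i he
    refine ⟨fun i => (W i).transfer _ (hW i), fun i => (hsol.1 i).transfer _, ?_⟩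
    intro i j hij e
    rw [SimpleGraph.Walk.edges_transfer, SimpleGraph.Walk.edges_transfer]
    exact hsol.2 i j hij e
  · rintro ⟨W, hsol⟩
    have hW : ∀ i, ∀ e ∈ (W i).edges, e ∈ G.edgeSet := fun i e he =>
      SimpleGraph.edgeSet_mono (SimpleGraph.deleteEdges_le _) ((W i).edges_subset_edgeSet he)
    refine ⟨fun i => (W i).transfer _ (hW i), fun i => (hsol.1 i).transfer _, ?_⟩
    intro i j hij e
    rw [SimpleGraph.Walk.edges_transfer, SimpleGraph.Walk.edges_transfer]
    exact hsol.2 i j hij e
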